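/- Let C ⊆ ℝⁿ be the convex polyhedron determined by vectors x*_1,…,x*_s ∈ ℝⁿ and scalars c_1,…,c_s, let g : ℝⁿ×ℝ^d → ℝⁿ be locally Lipschitz continuous, and let F(x,u) := N(x;C) + g(x,u). Fix x ∈ C at which PLICQ holds, u ∈ ℝ^d, and ω ∈ g(x,u) + N(x;C). Then every pair (z_x, z_u) ∈ ℝⁿ×ℝ^d belonging to D*F((x,u),ω)(0) satisfies z_u = 0. -/
import Mathlib


open Filter Topology Set MeasureTheory
open scoped RealInnerProductSpace

noncomputable section

/-- The limiting (Mordukhovich) normal cone to a set `Ω` at `z`. -/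
def limNormal {E : Type*} [NormedAddCommGroup E] [NormedSpace ℝ E]
    (Ω : Set E) (z : E) : Set E :=
  {v | ∃ (zk vk : ℕ → E) (tk : ℕ → ℝ) (yk : ℕ → E),
      Tendsto zk atTop (𝓝 z) ∧ Tendsto vk atTop (𝓝 v) ∧
      (∀ k, 0 ≤ tk k) ∧ (∀ k, yk k ∈ Ω) ∧
      (∀ k, ‖zk k - yk k‖ = Metric.infDist (zk k) Ω) ∧
      (∀ k, vk k = tk k • (zk k - yk k))}

/-- The convex normal cone to a convex set `C` at `x` (empty if `x ∉ C`). -/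
def convNormal {E : Type*} [NormedAddCommGroup E] [InnerProductSpace ℝ E]
    (C : Set E) (x : E) : Set E :=
  {v | x ∈ C ∧ ∀ y ∈ C, ⟪v, y - x⟫ ≤ 0}

/-- Pairing of two components into the `L²` product. -/
def pmk {E F : Type*} [NormedAddCommGroup E] [NormedAddCommGroup F]
    (a : E) (b : F) : WithLp 2 (E × F) :=
  (WithLp.equiv 2 (E × F)).symm (a, b)

/-- First component of an `L²` product element. -/
def pfst {E F : Type*} [NormedAddCommGroup E] [NormedAddCommGroup F]
    (q : WithLp 2 (E × F)) : E := ((WithLp.equiv 2 (E × F)) q).1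

/-- Second component of an `L²` product element. -/
def psnd {E F : Type*} [NormedAddCommGroup E] [NormedAddCommGroup F]
    (q : WithLp 2 (E × F)) : F := ((WithLp.equiv 2 (E × F)) q).2

/-- The coderivative of a set-valued map `G` at `(z, y) ∈ gph G`, applied to `w`. -/
def coderiv {E F : Type*} [NormedAddCommGroup E] [NormedSpace ℝ E]
    [NormedAddCommGroup F] [NormedSpace ℝ F]
    (G : E → Set F) (z : E) (y : F) (w : F) : Set E :=
  {v | pmk v (-w) ∈ limNormal {q : WithLp 2 (E × F) | psnd q ∈ G (pfst q)} (pmk z y)}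

/-- The limiting subdifferential of `h : E → ℝ` at `z`, via limiting normals to the epigraph. -/
def limSubdiff {E : Type*} [NormedAddCommGroup E] [NormedSpace ℝ E]
    (h : E → ℝ) (z : E) : Set E :=
  {v | pmk v (-1 : ℝ) ∈ limNormal {q : WithLp 2 (E × ℝ) | h (pfst q) ≤ psnd q} (pmk z (h z))}
/-- `Euc n` is the Euclidean space `ℝⁿ`. -/
abbrev Euc (n : ℕ) := EuclideanSpace ℝ (Fin n)

section Aux
variable {E F : Type*} [NormedAddCommGroup E] [NormedAddCommGroup F]

lemma aux_norm_pmk_sq (a : E) (b : F) : ‖pmk a b‖ ^ 2 = ‖a‖ ^ 2 + ‖b‖ ^ 2 :=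
  WithLp.prod_norm_sq_eq_of_L2 _

lemma aux_norm_pfst_le (q : WithLp 2 (E × F)) : ‖pfst q‖ ≤ ‖q‖ := by
  have h2 : ‖q‖ ^ 2 = ‖pfst q‖ ^ 2 + ‖psnd q‖ ^ 2 := aux_norm_pmk_sq (pfst q) (psnd q)
  have h1 : ‖pfst q‖ ^ 2 ≤ ‖q‖ ^ 2 := by nlinarith [sq_nonneg ‖psnd q‖]
  calc ‖pfst q‖ = Real.sqrt (‖pfst q‖ ^ 2) := (Real.sqrt_sq (norm_nonneg _)).symm
    _ ≤ Real.sqrt (‖q‖ ^ 2) := Real.sqrt_le_sqrt h1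
    _ = ‖q‖ := Real.sqrt_sq (norm_nonneg _)

lemma aux_norm_psnd_le (q : WithLp 2 (E × F)) : ‖psnd q‖ ≤ ‖q‖ := by
  have h2 : ‖q‖ ^ 2 = ‖pfst q‖ ^ 2 + ‖psnd q‖ ^ 2 := aux_norm_pmk_sq (pfst q) (psnd q)
  have h1 : ‖psnd q‖ ^ 2 ≤ ‖q‖ ^ 2 := by nlinarith [sq_nonneg ‖pfst q‖]
  calc ‖psnd q‖ = Real.sqrt (‖psnd q‖ ^ 2) := (Real.sqrt_sq (norm_nonneg _)).symm
    _ ≤ Real.sqrt (‖q‖ ^ 2) := Real.sqrt_le_sqrt h1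
    _ = ‖q‖ := Real.sqrt_sq (norm_nonneg _)

lemma aux_norm_pmk_zero (b : F) : ‖pmk (0 : E) b‖ = ‖b‖ := by
  have h := aux_norm_pmk_sq (0 : E) b
  rw [norm_zero] at h
  have h2 : ‖pmk (0 : E) b‖ ^ 2 = ‖b‖ ^ 2 := by simpa using h
  have := congrArg Real.sqrt h2
  simpa [Real.sqrt_sq (norm_nonneg _)] using this

lemma aux_tendsto_pfst {f : ℕ → WithLp 2 (E × F)} {a : WithLp 2 (E × F)}
    (h : Tendsto f atTop (𝓝 a)) :
    Tendsto (fun k => pfst (f k)) atTop (𝓝 (pfst a)) := by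
  rw [tendsto_iff_norm_sub_tendsto_zero] at h ⊢
  exact squeeze_zero (fun k => norm_nonneg _) (fun k => aux_norm_pfst_le (f k - a)) h

lemma aux_tendsto_psnd {f : ℕ → WithLp 2 (E × F)} {a : WithLp 2 (E × F)}
    (h : Tendsto f atTop (𝓝 a)) :
    Tendsto (fun k => psnd (f k)) atTop (𝓝 (psnd a)) := by
  rw [tendsto_iff_norm_sub_tendsto_zero] at h ⊢
  exact squeeze_zero (fun k => norm_nonneg _) (fun k => aux_norm_psnd_le (f k - a)) h

lemma aux_key (K t0 a β γ nrm : ℝ) (hK : 0 ≤ K) (hβ : 0 ≤ β) (hγ : 0 ≤ γ)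
    (ht0pos : 0 < t0) (ht0eq : t0 * (1 + K ^ 2) = 1)
    (hsq : a ^ 2 + β ^ 2 + γ ^ 2 ≤ a ^ 2 + (1 - t0) ^ 2 * β ^ 2 + nrm ^ 2)
    (hn : 0 ≤ nrm) (htri : nrm ≤ γ + K * (t0 * β)) :
    β ≤ 2 * K * γ := by
  have hsq2 : nrm ^ 2 ≤ (γ + K * (t0 * β)) ^ 2 := pow_le_pow_left₀ hn htri 2
  have h6 : t0 ^ 2 * (1 + K ^ 2) * β ^ 2 = t0 * β ^ 2 := by
    rw [sq, mul_assoc t0 t0 _, ht0eq, mul_one]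
  have h5 : 0 ≤ t0 * (2 * K * β * γ - β ^ 2) := by nlinarith [hsq, hsq2, h6]
  have key : β ^ 2 ≤ 2 * K * β * γ := by nlinarith [h5, ht0pos]
  rcases eq_or_lt_of_le hβ with h | h
  · rw [← h]; positivity
  · nlinarith [key, h]
end Aux
/-- vanishing of the `u`-component of coderivative elements of
`F(x,u) = N(x;C) + g(x,u)` at `w = 0` under PLICQ. -/
theorem statement5 (n d s : ℕ)
    (xs : Fin s → Euc n) (c : Fin s → ℝ)
    (g : WithLp 2 (Euc n × Euc d) → Euc n)
    (hg : LocallyLipschitz g)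
    (C : Set (Euc n)) (hC : C = {x | ∀ j, ⟪xs j, x⟫ ≤ c j})
    (F : WithLp 2 (Euc n × Euc d) → Set (Euc n))
    (hF : ∀ p, F p = {ω | ∃ v ∈ convNormal C (pfst p), ω = v + g p})
    (x : Euc n) (hx : x ∈ C)
    (hPLICQ : ∀ α : Fin s → ℝ, (∀ j, 0 ≤ α j) →
      (∀ j, ⟪xs j, x⟫ ≠ c j → α j = 0) → (∑ j, α j • xs j) = 0 → ∀ j, α j = 0)
    (u : Euc d) (ω : Euc n)
    (hω : ∃ v ∈ convNormal C x, ω = g (pmk x u) + v)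
    (z : WithLp 2 (Euc n × Euc d))
    (hz : z ∈ coderiv F (pmk x u) ω (0 : Euc n)) :
    psnd z = 0 := by
  -- destructure the coderivative membership
  have hz' : pmk z (-(0 : Euc n)) ∈
      limNormal {q : WithLp 2 (WithLp 2 (Euc n × Euc d) × Euc n) | psnd q ∈ F (pfst q)}
        (pmk (pmk x u) ω) := hz
  simp only [limNormal, Set.mem_setOf_eq] at hz'
  obtain ⟨zk, vk, tk, yk, hzk, hvk, htk, hyk, hnear, hveq⟩ := hz'
  -- the base point belongs to the graph
  have hmemΩ : pmk (pmk x u) ω ∈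
      {q : WithLp 2 (WithLp 2 (Euc n × Euc d) × Euc n) | psnd q ∈ F (pfst q)} := by
    show ω ∈ F (pmk x u)
    rw [hF]
    obtain ⟨v, hv, rfl⟩ := hω
    exact ⟨v, hv, add_comm _ _⟩
  -- distances go to zero, so yk converges to the base point
  have hd0 : Tendsto (fun k => ‖zk k - yk k‖) atTop (𝓝 0) := by
    have hcont := ((Metric.continuous_infDist_pt
      {q : WithLp 2 (WithLp 2 (Euc n × Euc d) × Euc n) | psnd q ∈ F (pfst q)}).tendsto
      (pmk (pmk x u) ω)).comp hzk
    rw [Metric.infDist_zero_of_mem hmemΩ] at hcont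
    simp only [hnear]
    exact hcont
  have hyk_lim : Tendsto yk atTop (𝓝 (pmk (pmk x u) ω)) := by
    have hsub : Tendsto (fun k => zk k - yk k) atTop (𝓝 0) :=
      tendsto_zero_iff_norm_tendsto_zero.mpr hd0
    have h4 := hzk.sub hsub
    rw [sub_zero] at h4
    simp only [sub_sub_cancel] at h4
    exact h4
  -- component limits
  have hQ : Tendsto (fun k => pfst (zk k)) atTop (𝓝 (pmk x u)) := aux_tendsto_pfst hzk
  have hP : Tendsto (fun k => pfst (yk k)) atTop (𝓝 (pmk x u)) := aux_tendsto_pfst hyk_lim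
  have hU : Tendsto (fun k => psnd (pfst (zk k))) atTop (𝓝 u) := aux_tendsto_psnd hQ
  have hB : Tendsto (fun k => psnd (pfst (yk k))) atTop (𝓝 u) := aux_tendsto_psnd hP
  -- local Lipschitz data
  obtain ⟨K, t, ht, hK⟩ := hg (pmk x u)
  obtain ⟨ε, hε, hball⟩ := Metric.mem_nhds_iff.mp ht
  have hKball : LipschitzOnWith K g (Metric.ball (pmk x u) ε) := hK.mono hball
  have hKnn : (0 : ℝ) ≤ (K : ℝ) := K.coe_nonneg
  set t0 : ℝ := 1 / (1 + (K : ℝ) ^ 2) with ht0def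
  have ht0pos : 0 < t0 := by rw [ht0def]; positivity
  have ht0le : t0 ≤ 1 := by
    rw [ht0def, div_le_one (by positivity)]; nlinarith
  have ht0eq : t0 * (1 + (K : ℝ) ^ 2) = 1 := by
    rw [ht0def]; field_simp
  -- the key eventual inequality
  have hev : ∀ᶠ k in atTop,
      ‖psnd (pfst (zk k)) - psnd (pfst (yk k))‖ ≤
        2 * (K : ℝ) * ‖psnd (zk k) - psnd (yk k)‖ := by
    have e1 := Metric.tendsto_nhds.mp hP (ε / 4) (by positivity)
    have e2 := Metric.tendsto_nhds.mp hU (ε / 4) (by positivity)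
    have e3 := Metric.tendsto_nhds.mp hB (ε / 4) (by positivity)
    filter_upwards [e1, e2, e3] with k h1 h2 h3
    rw [dist_eq_norm] at h1 h2 h3
    set Uk := psnd (pfst (zk k)) with hUk
    set Bk := psnd (pfst (yk k)) with hBk
    set D : WithLp 2 (Euc n × Euc d) := pmk 0 (Uk - Bk) with hDdef
    have hnormD : ‖D‖ = ‖Uk - Bk‖ := aux_norm_pmk_zero _
    set P' : WithLp 2 (Euc n × Euc d) := pfst (yk k) + t0 • D with hP'def
    have hPball : pfst (yk k) ∈ Metric.ball (pmk x u) ε := by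
      rw [Metric.mem_ball, dist_eq_norm]; linarith
    have hP'ball : P' ∈ Metric.ball (pmk x u) ε := by
      rw [Metric.mem_ball, dist_eq_norm]
      have heq : P' - pmk x u = (pfst (yk k) - pmk x u) + t0 • D := by
        rw [hP'def]; abel
      have hUB : ‖Uk - Bk‖ ≤ ‖Uk - u‖ + ‖u - Bk‖ := norm_sub_le_norm_sub_add_norm_sub _ _ _
      have huB : ‖u - Bk‖ = ‖Bk - u‖ := norm_sub_rev _ _
      calc ‖P' - pmk x u‖ ≤ ‖pfst (yk k) - pmk x u‖ + ‖t0 • D‖ := by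
            rw [heq]; exact norm_add_le _ _
        _ = ‖pfst (yk k) - pmk x u‖ + t0 * ‖D‖ := by
            rw [norm_smul, Real.norm_of_nonneg ht0pos.le]
        _ ≤ ‖pfst (yk k) - pmk x u‖ + ‖D‖ := by nlinarith [norm_nonneg D]
        _ < ε := by rw [hnormD]; linarith
    -- the perturbed point lies in the graph
    have hgm : psnd (yk k) ∈ F (pfst (yk k)) := hyk k
    rw [hF] at hgm
    obtain ⟨v, hv, hveq2⟩ := hgm
    have hPfst : pfst P' = pfst (pfst (yk k)) := by
      show pfst (pfst (yk k)) + t0 • (0 : Euc n) = pfst (pfst (yk k))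
      rw [smul_zero, add_zero]
    have hp'mem : pmk P' (v + g P') ∈
        {q : WithLp 2 (WithLp 2 (Euc n × Euc d) × Euc n) | psnd q ∈ F (pfst q)} := by
      show (v + g P') ∈ F P'
      rw [hF]
      exact ⟨v, hPfst ▸ hv, rfl⟩
    have hle : ‖zk k - yk k‖ ≤ ‖zk k - pmk P' (v + g P')‖ := by
      rw [hnear k]
      have h5 := Metric.infDist_le_dist_of_mem (x := zk k) hp'mem
      rwa [dist_eq_norm] at h5
    -- expand both squared norms
    have e_lhs : ‖zk k - yk k‖ ^ 2 =
        ‖pfst (pfst (zk k)) - pfst (pfst (yk k))‖ ^ 2 + ‖Uk - Bk‖ ^ 2 +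
          ‖psnd (zk k) - psnd (yk k)‖ ^ 2 := by
      have h0 : zk k - yk k =
          pmk (pmk (pfst (pfst (zk k)) - pfst (pfst (yk k))) (Uk - Bk))
            (psnd (zk k) - psnd (yk k)) := rfl
      rw [h0, aux_norm_pmk_sq, aux_norm_pmk_sq]
    have hQP' : pfst (zk k) - P' =
        pmk (pfst (pfst (zk k)) - pfst (pfst (yk k))) ((1 - t0) • (Uk - Bk)) := by
      have h0 : pfst (zk k) - P' =
          pmk (pfst (pfst (zk k)) - (pfst (pfst (yk k)) + t0 • (0 : Euc n)))
            (Uk - (Bk + t0 • (Uk - Bk))) := rfl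
      rw [h0, smul_zero, add_zero, sub_smul, one_smul]
      congr 1
      abel
    have hW' : psnd (zk k) - (v + g P') =
        (psnd (zk k) - psnd (yk k)) - (g P' - g (pfst (yk k))) := by
      rw [hveq2]; abel
    have e_rhs : ‖zk k - pmk P' (v + g P')‖ ^ 2 =
        ‖pfst (pfst (zk k)) - pfst (pfst (yk k))‖ ^ 2 +
          (1 - t0) ^ 2 * ‖Uk - Bk‖ ^ 2 +
          ‖(psnd (zk k) - psnd (yk k)) - (g P' - g (pfst (yk k)))‖ ^ 2 := by
      have h0 : zk k - pmk P' (v + g P') =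
          pmk (pfst (zk k) - P') (psnd (zk k) - (v + g P')) := rfl
      rw [h0, hQP', hW', aux_norm_pmk_sq, aux_norm_pmk_sq, norm_smul,
        Real.norm_of_nonneg (by linarith : (0 : ℝ) ≤ 1 - t0)]
      ring
    -- Lipschitz bound for the correction term
    have hlip : ‖g P' - g (pfst (yk k))‖ ≤ (K : ℝ) * (t0 * ‖Uk - Bk‖) := by
      have hd := hKball.dist_le_mul P' hP'ball (pfst (yk k)) hPball
      rw [dist_eq_norm, dist_eq_norm] at hd
      have : P' - pfst (yk k) = t0 • D := by rw [hP'def]; abel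
      rwa [this, norm_smul, Real.norm_of_nonneg ht0pos.le, hnormD] at hd
    have htri : ‖(psnd (zk k) - psnd (yk k)) - (g P' - g (pfst (yk k)))‖ ≤
        ‖psnd (zk k) - psnd (yk k)‖ + (K : ℝ) * (t0 * ‖Uk - Bk‖) :=
      le_trans (norm_sub_le _ _) (by linarith)
    have hsq : ‖zk k - yk k‖ ^ 2 ≤ ‖zk k - pmk P' (v + g P')‖ ^ 2 :=
      pow_le_pow_left₀ (norm_nonneg _) hle 2
    rw [e_lhs, e_rhs] at hsq
    exact aux_key (K : ℝ) t0 _ _ _ _ hKnn (norm_nonneg _) (norm_nonneg _)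
      ht0pos ht0eq hsq (norm_nonneg _) htri
  -- pass to the limit
  have hevfin : ∀ᶠ k in atTop,
      ‖tk k • (psnd (pfst (zk k)) - psnd (pfst (yk k)))‖ ≤
        2 * (K : ℝ) * ‖tk k • (psnd (zk k) - psnd (yk k))‖ := by
    filter_upwards [hev] with k hk
    rw [norm_smul, norm_smul, Real.norm_of_nonneg (htk k)]
    have := mul_le_mul_of_nonneg_left hk (htk k)
    nlinarith [this]
  have hA : Tendsto (fun k => ‖tk k • (psnd (pfst (zk k)) - psnd (pfst (yk k)))‖)
      atTop (𝓝 ‖psnd z‖) := by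
    have h1 : Tendsto (fun k => psnd (pfst (vk k))) atTop
        (𝓝 (psnd (pfst (pmk z (-(0 : Euc n)))))) := aux_tendsto_psnd (aux_tendsto_pfst hvk)
    have h2 : ∀ k, psnd (pfst (vk k)) = tk k • (psnd (pfst (zk k)) - psnd (pfst (yk k))) :=
      fun k => by rw [hveq k]; rfl
    have h3 : psnd (pfst (pmk z (-(0 : Euc n)))) = psnd z := rfl
    rw [h3] at h1
    simp only [h2] at h1
    exact h1.norm
  have hBt : Tendsto (fun k => 2 * (K : ℝ) * ‖tk k • (psnd (zk k) - psnd (yk k))‖)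
      atTop (𝓝 (2 * (K : ℝ) * ‖(-(0 : Euc n))‖)) := by
    have h1 : Tendsto (fun k => psnd (vk k)) atTop
        (𝓝 (psnd (pmk z (-(0 : Euc n))))) := aux_tendsto_psnd hvk
    have h2 : ∀ k, psnd (vk k) = tk k • (psnd (zk k) - psnd (yk k)) :=
      fun k => by rw [hveq k]; rfl
    have h3 : psnd (pmk z (-(0 : Euc n))) = -(0 : Euc n) := rfl
    rw [h3] at h1
    simp only [h2] at h1
    exact h1.norm.const_mul _
  have hfin : ‖psnd z‖ ≤ 2 * (K : ℝ) * ‖(-(0 : Euc n))‖ :=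
    le_of_tendsto_of_tendsto hA hBt hevfin
  have hz0 : ‖psnd z‖ ≤ 0 := by simpa using hfin
  exact norm_le_zero_iff.mp hz0
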